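/- Let G be a nonabelian group of order p q² where p, q are distinct primes. Then G has a largest nontrivial abelian normal subgroup, i.e., a nontrivial abelian normal subgroup containing every other nontrivial abelian normal subgroup of G. -/

import Mathlib

open Subgroup

section Helpers

variable {G : Type*} [Group G]

/-- The join of two commuting "abelian" subgroups is abelian. -/
lemma sup_comm_of_comm (A B : Subgroup G)
    (hA : ∀ x ∈ A, ∀ y ∈ A, x * y = y * x)
    (hB : ∀ x ∈ B, ∀ y ∈ B, x * y = y * x)
    (hAB : ∀ x ∈ A, ∀ y ∈ B, x * y = y * x) :
    ∀ x ∈ A ⊔ B, ∀ y ∈ A ⊔ B, x * y = y * x := by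
  have hcA : A ⊔ B ≤ centralizer (A : Set G) := by
    refine sup_le ?_ ?_
    · exact fun a ha => mem_centralizer_iff.2 fun y hy => hA y hy a ha
    · exact fun b hb => mem_centralizer_iff.2 fun y hy => hAB y hy b hb
  have hcB : A ⊔ B ≤ centralizer (B : Set G) := by
    refine sup_le ?_ ?_
    · exact fun a ha => mem_centralizer_iff.2 fun y hy => (hAB a ha y hy).symm
    · exact fun b hb => mem_centralizer_iff.2 fun y hy => hB y hy b hb
  have key : A ⊔ B ≤ centralizer ((A ⊔ B : Subgroup G) : Set G) := by
    refine sup_le ?_ ?_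
    · rw [le_centralizer_iff]; exact hcA
    · rw [le_centralizer_iff]; exact hcB
  intro x hx y hy
  exact mem_centralizer_iff.1 (key hy) x hx

variable [Fintype G]

lemma core_normal (p : ℕ) [Fact p.Prime] :
    (⨅ S : Sylow p G, (S : Subgroup G)).Normal := by
  constructor
  intro n hn g
  rw [Subgroup.mem_iInf] at hn ⊢
  intro S
  have h := hn (g⁻¹ • S)
  rw [Sylow.coe_subgroup_smul, Subgroup.mem_pointwise_smul_iff_inv_smul_mem] at h
  simpa [mul_assoc] using h

lemma le_core_of_normal_pgroup {p : ℕ} [Fact p.Prime] (H : Subgroup G)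
    (hn : H.Normal) (hp : IsPGroup p H) : H ≤ ⨅ S : Sylow p G, (S : Subgroup G) := by
  obtain ⟨S₀, hS₀⟩ := hp.exists_le_sylow
  refine le_iInf fun S => fun x hx => ?_
  obtain ⟨g, hg⟩ := MulAction.exists_smul_eq G S₀ S
  have hmem : g⁻¹ * x * g ∈ S₀ := hS₀ (by simpa using hn.conj_mem x hx g⁻¹)
  rw [← hg, Sylow.coe_subgroup_smul, Subgroup.mem_pointwise_smul_iff_inv_smul_mem]
  have hmem' : g⁻¹ * x * g ∈ (S₀ : Subgroup G) := hmem
  convert hmem' using 1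
  simp [mul_assoc]

lemma mem_core_of_mem_abelian_normal {r : ℕ} [Fact r.Prime] (M : Subgroup G)
    (hMn : M.Normal) (hMc : ∀ x ∈ M, ∀ y ∈ M, x * y = y * x) :
    ∀ x, ∀ hx : x ∈ M, (∃ k, x ^ r ^ k = 1) → x ∈ ⨅ S : Sylow r G, (S : Subgroup G) := by
  classical
  have hcomm : ∀ a b : ↥M, a * b = b * a := fun a b => Subtype.ext (hMc a a.2 b b.2)
  obtain ⟨R⟩ : Nonempty (Sylow r ↥M) := Sylow.nonempty
  have hRn : (R : Subgroup ↥M).Normal := by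
    constructor
    intro n hn g
    rw [hcomm g n, mul_inv_cancel_right]
    exact hn
  haveI : Subsingleton (Sylow r ↥M) := by
    haveI := Sylow.unique_of_normal R hRn
    infer_instance
  have hmem : ∀ x, ∀ hx : x ∈ M, (∃ k, x ^ r ^ k = 1) →
      (⟨x, hx⟩ : ↥M) ∈ (R : Subgroup ↥M) := by
    rintro x hx ⟨k, hk⟩
    set m : ↥M := ⟨x, hx⟩ with hm
    have h1 : m ^ r ^ k = 1 := Subtype.ext (by simpa using hk)
    have hdvd : orderOf m ∣ r ^ k := orderOf_dvd_of_pow_eq_one h1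
    obtain ⟨j, _, hj⟩ := (Nat.dvd_prime_pow (Fact.out : r.Prime)).1 hdvd
    have h2 : IsPGroup r (Subgroup.zpowers m) :=
      IsPGroup.of_card (by rw [Nat.card_zpowers, hj])
    obtain ⟨R', hR'⟩ := h2.exists_le_sylow
    rw [Subsingleton.elim R' R] at hR'
    exact hR' (Subgroup.mem_zpowers m)
  set H := (R : Subgroup ↥M).map M.subtype with hH
  have hHc : ∀ y ∈ H, y ∈ M ∧ ∃ k, y ^ r ^ k = 1 := by
    rintro y ⟨z, hz, rfl⟩
    refine ⟨z.2, ?_⟩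
    obtain ⟨k, hk⟩ := R.2 ⟨z, hz⟩
    exact ⟨k, by simpa using congrArg (M.subtype) (Subtype.ext_iff.1 hk)⟩
  have hHn : H.Normal := by
    constructor
    intro y hy g
    obtain ⟨hyM, k, hk⟩ := hHc y hy
    have h1 : g * y * g⁻¹ ∈ M := hMn.conj_mem y hyM g
    have h2 : (g * y * g⁻¹) ^ r ^ k = 1 := by
      rw [conj_pow, hk, mul_one, mul_inv_cancel]
    exact ⟨⟨g * y * g⁻¹, h1⟩, hmem _ h1 ⟨k, h2⟩, rfl⟩
  intro x hx hk
  exact le_core_of_normal_pgroup H hHn (R.2.map M.subtype) ⟨⟨x, hx⟩, hmem x hx hk, rfl⟩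

lemma sylow_normal_of_subsingleton {r : ℕ} [Fact r.Prime] (S : Sylow r G)
    (h : Subsingleton (Sylow r G)) : (S : Subgroup G).Normal := by
  rw [← normalizer_eq_top_iff, eq_top_iff]
  intro g _
  exact Sylow.smul_eq_iff_mem_normalizer.mp (Subsingleton.elim _ _)

lemma pow_natCard_subgroup {H : Subgroup G} {x : G} (hx : x ∈ H) :
    x ^ (Nat.card H) = 1 := by
  have h : (⟨x, hx⟩ : H) ^ (Nat.card H) = 1 := pow_card_eq_one'
  have h2 : ((⟨x, hx⟩ : H) : G) ^ (Nat.card H) = ((1 : H) : G) := by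
    rw [← SubmonoidClass.coe_pow, h]
  simpa using h2

end Helpers

section Main

lemma sylow_cards {G : Type*} [Group G] [Fintype G] {p q : ℕ} [Fact p.Prime] [Fact q.Prime]
    (hp : p.Prime) (hq : q.Prime) (hpq : p ≠ q) (hcard : Fintype.card G = p * q ^ 2) :
    (∀ S : Sylow p G, Nat.card S = p) ∧ (∀ S : Sylow q G, Nat.card S = q ^ 2) := by
  have hG : Nat.card G = p * q ^ 2 := by rw [Nat.card_eq_fintype_card, hcard]
  have hfac : (p * q ^ 2).factorization = Finsupp.single p 1 + Finsupp.single q 2 := by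
    rw [Nat.factorization_mul hp.pos.ne' (pow_ne_zero 2 hq.pos.ne'), hp.factorization,
      hq.factorization_pow]
  constructor
  · intro S
    rw [S.card_eq_multiplicity, hG, hfac]
    simp [Finsupp.single_apply, hpq, Ne.symm hpq]
  · intro S
    rw [S.card_eq_multiplicity, hG, hfac]
    simp [Finsupp.single_apply, hpq, Ne.symm hpq]

lemma exists_normal_sylow {G : Type*} [Group G] [Fintype G] {p q : ℕ} [Fact p.Prime] [Fact q.Prime]
    (hp : p.Prime) (hq : q.Prime) (hpq : p ≠ q) (hcard : Fintype.card G = p * q ^ 2) :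
    (∃ S : Sylow p G, (S : Subgroup G).Normal) ∨ (∃ S : Sylow q G, (S : Subgroup G).Normal) := by
  classical
  by_contra hcon
  push_neg at hcon
  obtain ⟨hnp, hnq⟩ := hcon
  obtain ⟨hPcard, hQcard⟩ := sylow_cards hp hq hpq hcard
  have hG : Nat.card G = p * q ^ 2 := by rw [Nat.card_eq_fintype_card, hcard]
  have hp2 := hp.two_le
  have hq2 := hq.two_le
  have hntp : Nontrivial (Sylow p G) := by
    rw [← not_subsingleton_iff_nontrivial]
    intro h
    obtain ⟨S⟩ : Nonempty (Sylow p G) := Sylow.nonempty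
    exact hnp S (sylow_normal_of_subsingleton S h)
  have hntq : Nontrivial (Sylow q G) := by
    rw [← not_subsingleton_iff_nontrivial]
    intro h
    obtain ⟨S⟩ : Nonempty (Sylow q G) := Sylow.nonempty
    exact hnq S (sylow_normal_of_subsingleton S h)
  obtain ⟨P₀⟩ : Nonempty (Sylow p G) := Sylow.nonempty
  obtain ⟨Q₀⟩ : Nonempty (Sylow q G) := Sylow.nonempty
  have hPidx : (P₀ : Subgroup G).index = q ^ 2 := by
    have h1 : Nat.card (P₀ : Subgroup G) * (P₀ : Subgroup G).index = Nat.card G :=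
      Subgroup.card_mul_index _
    rw [hPcard P₀, hG] at h1
    exact Nat.eq_of_mul_eq_mul_left hp.pos h1
  have hQidx : (Q₀ : Subgroup G).index = p := by
    have h1 : Nat.card (Q₀ : Subgroup G) * (Q₀ : Subgroup G).index = Nat.card G :=
      Subgroup.card_mul_index _
    rw [hQcard Q₀, hG, mul_comm p (q ^ 2)] at h1
    exact Nat.eq_of_mul_eq_mul_left (pow_pos hq.pos 2) h1
  have hnq1 : 1 < Nat.card (Sylow q G) := Finite.one_lt_card_iff_nontrivial.2 hntq
  have hnp1 : 1 < Nat.card (Sylow p G) := Finite.one_lt_card_iff_nontrivial.2 hntp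
  have hdq : Nat.card (Sylow q G) ∣ p := hQidx ▸ Sylow.card_dvd_index Q₀
  have hnqp : Nat.card (Sylow q G) = p :=
    (Nat.Prime.eq_one_or_self_of_dvd hp _ hdq).resolve_left (by omega)
  have hmodq : Nat.card (Sylow q G) ≡ 1 [MOD q] := card_sylow_modEq_one q G
  have hqd : q ∣ p - 1 := (Nat.modEq_iff_dvd' hp.one_le).1 (hnqp ▸ hmodq).symm
  have hqltp : q < p := by
    have h1 : q ≤ p - 1 := Nat.le_of_dvd (by omega) hqd
    omega
  have hdp : Nat.card (Sylow p G) ∣ q ^ 2 := hPidx ▸ Sylow.card_dvd_index P₀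
  obtain ⟨i, hi2, hnpq⟩ := (Nat.dvd_prime_pow hq).1 hdp
  have hmodp : Nat.card (Sylow p G) ≡ 1 [MOD p] := card_sylow_modEq_one p G
  have hpd : p ∣ Nat.card (Sylow p G) - 1 := (Nat.modEq_iff_dvd' (by omega)).1 hmodp.symm
  interval_cases i
  · rw [pow_zero] at hnpq; omega
  · rw [pow_one] at hnpq
    rw [hnpq] at hpd
    have : p ≤ q - 1 := Nat.le_of_dvd (by omega) hpd
    omega
  · rw [hnpq] at hpd hnp1
    have hfac2 : q ^ 2 - 1 = (q - 1) * (q + 1) := by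
      have h1 : 1 ≤ q := by omega
      have h2 : 1 ≤ q ^ 2 := Nat.one_le_pow _ _ (by omega)
      zify [h1, h2]
      ring
    have hpd2 : p ∣ (q - 1) * (q + 1) := hfac2 ▸ hpd
    rcases (Nat.Prime.dvd_mul hp).1 hpd2 with h | h
    · have : p ≤ q - 1 := Nat.le_of_dvd (by omega) h
      omega
    · have hple : p ≤ q + 1 := Nat.le_of_dvd (by omega) h
      have hpq1 : p = q + 1 := by omega
      have hq2' : q = 2 := by
        by_contra hne
        obtain ⟨m, hm⟩ := hq.odd_of_ne_two hne
        have heven : 2 ∣ p := by omega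
        rcases Nat.Prime.eq_one_or_self_of_dvd hp 2 heven with h' | h' <;> omega
      have hp3 : p = 3 := by omega
      subst hq2' hp3
      -- now |G| = 12path, n₃ = 4, counting contradiction
      set f : Sylow 3 G → Finset G :=
        fun S => Finset.univ.filter (fun x => x ∈ (S : Subgroup G) ∧ x ≠ 1) with hf
      have hfin : ∀ S : Sylow 3 G,
          (Finset.univ.filter (fun x => x ∈ (S : Subgroup G))).card = 3 := by
        intro S
        rw [← Fintype.card_subtype, ← Nat.card_eq_fintype_card]
        exact hPcard S
      have hfcard : ∀ S, (f S).card = 2 := by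
        intro S
        have he : f S = (Finset.univ.filter (fun x => x ∈ (S : Subgroup G))).erase 1 := by
          ext x
          simp only [hf, Finset.mem_filter, Finset.mem_erase, Finset.mem_univ, true_and]
          tauto
        rw [he, Finset.card_erase_of_mem (by simp [(S : Subgroup G).one_mem]), hfin S]
      have hdisj : ∀ S : Sylow 3 G, ∀ T : Sylow 3 G, S ≠ T → Disjoint (f S) (f T) := by
        intro S T hST
        rw [Finset.disjoint_left]
        intro x hxS hxT
        simp only [hf, Finset.mem_filter, Finset.mem_univ, true_and] at hxS hxT
        obtain ⟨hxS, hx1⟩ := hxS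
        obtain ⟨hxT, -⟩ := hxT
        have hord : orderOf x = 3 := by
          have h3 : x ^ 3 = 1 := by
            have h := pow_natCard_subgroup hxS
            rwa [hPcard S] at h
          rcases Nat.Prime.eq_one_or_self_of_dvd Nat.prime_three _
              (orderOf_dvd_of_pow_eq_one h3) with h | h
          · exact absurd (orderOf_eq_one_iff.1 h) hx1
          · exact h
        have hZS : Subgroup.zpowers x = (S : Subgroup G) := by
          apply Subgroup.eq_of_le_of_card_ge ((Subgroup.zpowers_le).2 hxS)
          rw [hPcard S, Nat.card_zpowers, hord]
        have hZT : Subgroup.zpowers x = (T : Subgroup G) := by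
          apply Subgroup.eq_of_le_of_card_ge ((Subgroup.zpowers_le).2 hxT)
          rw [hPcard T, Nat.card_zpowers, hord]
        exact hST (Sylow.ext (hZS.symm.trans hZT))
      have hbig : (Finset.univ.biUnion f).card = 8 := by
        rw [Finset.card_biUnion (fun S _ T _ h => hdisj S T h)]
        have hcu : (Finset.univ : Finset (Sylow 3 G)).card = 4 := by
          rw [Finset.card_univ, ← Nat.card_eq_fintype_card, hnpq]
          norm_num
        rw [Finset.sum_congr rfl (fun S _ => hfcard S), Finset.sum_const, hcu]
        norm_num
      obtain ⟨S₂, T₂, hST2⟩ := exists_pair_ne (Sylow 2 G)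
      set gfin : Sylow 2 G → Finset G :=
        fun S => Finset.univ.filter (fun x => x ∈ (S : Subgroup G)) with hg
      have hgcard : ∀ S : Sylow 2 G, (gfin S).card = 4 := by
        intro S
        rw [hg]
        rw [← Fintype.card_subtype, ← Nat.card_eq_fintype_card, hQcard S]
        norm_num
      have hsub : ∀ S : Sylow 2 G, gfin S ⊆ Finset.univ \ Finset.univ.biUnion f := by
        intro S x hx
        simp only [hg, Finset.mem_filter, Finset.mem_univ, true_and] at hx
        rw [Finset.mem_sdiff]
        refine ⟨Finset.mem_univ x, fun hmem => ?_⟩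
        rw [Finset.mem_biUnion] at hmem
        obtain ⟨U, -, hU⟩ := hmem
        simp only [hf, Finset.mem_filter, Finset.mem_univ, true_and] at hU
        obtain ⟨hxU, hx1⟩ := hU
        have h3 : x ^ 3 = 1 := by
          have h := pow_natCard_subgroup hxU
          rwa [hPcard U] at h
        have h4 : x ^ 4 = 1 := by
          have h := pow_natCard_subgroup hx
          rwa [hQcard S] at h
        have hdvd1 : orderOf x ∣ 1 :=
          Nat.dvd_sub (orderOf_dvd_of_pow_eq_one h4) (orderOf_dvd_of_pow_eq_one h3)
        exact hx1 (orderOf_eq_one_iff.1 (Nat.dvd_one.1 hdvd1))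
      have hcmpl : (Finset.univ \ Finset.univ.biUnion f).card = 4 := by
        rw [Finset.card_sdiff_of_subset (Finset.subset_univ _), hbig, Finset.card_univ, hcard]
        norm_num
        
      have heqS : gfin S₂ = Finset.univ \ Finset.univ.biUnion f :=
        Finset.eq_of_subset_of_card_le (hsub S₂) (by rw [hcmpl, hgcard])
      have heqT : gfin T₂ = Finset.univ \ Finset.univ.biUnion f :=
        Finset.eq_of_subset_of_card_le (hsub T₂) (by rw [hcmpl, hgcard])
      apply hST2
      apply Sylow.ext
      apply SetLike.ext
      intro x
      have hx : x ∈ gfin S₂ ↔ x ∈ gfin T₂ := by rw [heqS, heqT]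
      simpa [hg] using hx

end Main

lemma comm_of_subtype_comm {G : Type*} [Group G] {H : Subgroup G}
    (h : ∀ a b : ↥H, a * b = b * a) :
    ∀ x ∈ H, ∀ y ∈ H, x * y = y * x := fun x hx y hy =>
  congrArg Subtype.val (h ⟨x, hx⟩ ⟨y, hy⟩)

/-- Let `G` be a nonabelian group of order `p q²` where `p, q` are distinct primes. Then
`G` has a largest nontrivial abelian normal subgroup, i.e. a nontrivial abelian normal
subgroup containing every other nontrivial abelian normal subgroup of `G`. -/
theorem stmt_9 (p q : ℕ) (hp : p.Prime) (hq : q.Prime) (hpq : p ≠ q)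
    (G : Type*) [Group G] [Fintype G] (hcard : Fintype.card G = p * q ^ 2)
    (hnab : ∃ x y : G, x * y ≠ y * x) :
    ∃ N : Subgroup G, N.Normal ∧ N ≠ ⊥ ∧ (∀ x ∈ N, ∀ y ∈ N, x * y = y * x) ∧
      ∀ M : Subgroup G, M.Normal → M ≠ ⊥ → (∀ x ∈ M, ∀ y ∈ M, x * y = y * x) → M ≤ N := by
  classical
  haveI hfp := Fact.mk hp
  haveI hfq := Fact.mk hq
  set Op : Subgroup G := ⨅ S : Sylow p G, (S : Subgroup G) with hOp
  set Oq : Subgroup G := ⨅ S : Sylow q G, (S : Subgroup G) with hOq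
  have hOpn : Op.Normal := core_normal p
  have hOqn : Oq.Normal := core_normal q
  obtain ⟨P₀⟩ : Nonempty (Sylow p G) := Sylow.nonempty
  obtain ⟨Q₀⟩ : Nonempty (Sylow q G) := Sylow.nonempty
  obtain ⟨hPcard, hQcard⟩ := sylow_cards hp hq hpq hcard
  have hOple : Op ≤ (P₀ : Subgroup G) := iInf_le _ _
  have hOqle : Oq ≤ (Q₀ : Subgroup G) := iInf_le _ _
  -- the two cores are abelian
  have hPab : ∀ x ∈ (P₀ : Subgroup G), ∀ y ∈ (P₀ : Subgroup G), x * y = y * x := by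
    haveI : IsCyclic (P₀ : Subgroup G) := isCyclic_of_prime_card (hPcard P₀)
    letI cg := IsCyclic.commGroup (α := ↥(P₀ : Subgroup G))
    exact comm_of_subtype_comm fun a b => mul_comm a b
  have hQab : ∀ x ∈ (Q₀ : Subgroup G), ∀ y ∈ (Q₀ : Subgroup G), x * y = y * x :=
    comm_of_subtype_comm (IsPGroup.commutative_of_card_eq_prime_sq (hQcard Q₀))
  have hOpab : ∀ x ∈ Op, ∀ y ∈ Op, x * y = y * x :=
    fun x hx y hy => hPab x (hOple hx) y (hOple hy)
  have hOqab : ∀ x ∈ Oq, ∀ y ∈ Oq, x * y = y * x :=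
    fun x hx y hy => hQab x (hOqle hx) y (hOqle hy)
  -- disjointness
  have hco : Nat.Coprime p (q ^ 2) := ((Nat.coprime_primes hp hq).2 hpq).pow_right 2
  have hdisj : Disjoint Op Oq := by
    rw [disjoint_iff]
    apply inf_eq_bot_of_coprime
    have h1 : Nat.card Op ∣ p := by
      rw [← hPcard P₀]; exact Subgroup.card_dvd_of_le hOple
    have h2 : Nat.card Oq ∣ q ^ 2 := by
      rw [← hQcard Q₀]; exact Subgroup.card_dvd_of_le hOqle
    exact Nat.Coprime.coprime_dvd_left h1 (Nat.Coprime.coprime_dvd_right h2 hco)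
  refine ⟨Op ⊔ Oq, ?_, ?_, ?_, ?_⟩
  · haveI := hOpn; haveI := hOqn
    exact Subgroup.sup_normal Op Oq
  · -- nontrivial
    rcases exists_normal_sylow hp hq hpq hcard with ⟨S, hS⟩ | ⟨S, hS⟩
    · haveI : Subsingleton (Sylow p G) := by
        haveI := Sylow.unique_of_normal S hS; infer_instance
      have hOpS : Op = (S : Subgroup G) :=
        le_antisymm (iInf_le _ _) (le_iInf fun T => by rw [Subsingleton.elim T S])
      intro hbot
      have h1 : Op = ⊥ := bot_unique (hbot ▸ (le_sup_left : Op ≤ Op ⊔ Oq))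
      have h2 : Nat.card Op = 1 := h1 ▸ Subgroup.card_bot
      rw [hOpS, hPcard S] at h2
      exact hp.one_lt.ne' h2
    · haveI : Subsingleton (Sylow q G) := by
        haveI := Sylow.unique_of_normal S hS; infer_instance
      have hOqS : Oq = (S : Subgroup G) :=
        le_antisymm (iInf_le _ _) (le_iInf fun T => by rw [Subsingleton.elim T S])
      intro hbot
      have h1 : Oq = ⊥ := bot_unique (hbot ▸ (le_sup_right : Oq ≤ Op ⊔ Oq))
      have h2 : Nat.card Oq = 1 := h1 ▸ Subgroup.card_bot
      rw [hOqS, hQcard S] at h2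
      have := hq.one_lt
      nlinarith [hq.one_lt]
  · -- abelian
    exact sup_comm_of_comm Op Oq hOpab hOqab fun x hx y hy =>
      (Subgroup.commute_of_normal_of_disjoint Op Oq hOpn hOqn hdisj x y hx hy)
  · -- maximality
    intro M hMn _ hMc x hx
    obtain ⟨c, d, hcd⟩ : IsCoprime (p : ℤ) ((q : ℤ) ^ 2) := by
      rw [Int.isCoprime_iff_gcd_eq_one]
      exact_mod_cast hco
    have hxcard : x ^ ((p : ℤ) * (q : ℤ) ^ 2) = 1 := by
      have h1 : x ^ Fintype.card G = 1 := pow_card_eq_one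
      rw [hcard] at h1
      rw [show (p : ℤ) * (q : ℤ) ^ 2 = ((p * q ^ 2 : ℕ) : ℤ) by push_cast; ring,
        zpow_natCast, h1]
    set u : G := x ^ (d * (q : ℤ) ^ 2) with hu
    set v : G := x ^ (c * (p : ℤ)) with hv
    have huv : u * v = x := by
      rw [hu, hv, ← zpow_add, show d * (q:ℤ)^2 + c * p = c * p + d * q^2 by ring, hcd, zpow_one]
    have hup : u ^ p = 1 := by
      rw [hu, ← zpow_natCast, ← zpow_mul,
        show d * (q:ℤ)^2 * (p:ℕ) = ((p:ℤ) * (q:ℤ)^2) * d by push_cast; ring,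
        zpow_mul, hxcard, one_zpow]
    have hvq : v ^ q ^ 2 = 1 := by
      rw [hv, ← zpow_natCast, ← zpow_mul,
        show c * (p:ℤ) * ((q^2 : ℕ) : ℤ) = ((p:ℤ) * (q:ℤ)^2) * c by push_cast; ring,
        zpow_mul, hxcard, one_zpow]
    have huM : u ∈ M := M.zpow_mem hx _
    have hvM : v ∈ M := M.zpow_mem hx _
    have huOp : u ∈ Op :=
      mem_core_of_mem_abelian_normal M hMn hMc u huM ⟨1, by rwa [pow_one]⟩
    have hvOq : v ∈ Oq :=
      mem_core_of_mem_abelian_normal M hMn hMc v hvM ⟨2, hvq⟩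
    rw [← huv]
    exact Subgroup.mul_mem _ ((le_sup_left : Op ≤ Op ⊔ Oq) huOp)
      ((le_sup_right : Oq ≤ Op ⊔ Oq) hvOq)
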